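/- Let M = (E, I) be a matroid with a total order < on E, and let T ∈ I. If S = D_M(T) is the set of elements dominated by T, then the greedy algorithm considering the elements of S in the order < selects exactly the set T; consequently if w : E → ℝ≥0 is decreasing with respect to < (e < f implies w(e) ≥ w(f)), then T is a maximum-weight independent subset of S. -/

import Mathlib

open Finset
open scoped Classical

structure FinMatroid (α : Type) [DecidableEq α] where
  E : Finset α
  Indep : Finset α → Prop
  indep_empty : Indep ∅
  subset_ground : ∀ ⦃X⦄, Indep X → X ⊆ E
  indep_mono : ∀ ⦃X Y⦄, X ⊆ Y → Indep Y → Indep X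
  indep_exchange : ∀ ⦃X Y⦄, Indep X → Indep Y → X.card < Y.card →
    ∃ e ∈ Y \ X, Indep (insert e X)

namespace FinMatroid

variable {α : Type} [DecidableEq α]

noncomputable def rank (M : FinMatroid α) (X : Finset α) : ℕ :=
  sSup {n | ∃ Y ⊆ X, M.Indep Y ∧ Y.card = n}

def spn (M : FinMatroid α) (X : Finset α) : Set α :=
  {e | e ∈ M.E ∧ M.rank (insert e X) = M.rank X}

end FinMatroid

def Dominates {α : Type} [DecidableEq α] (M : FinMatroid α) (lt : α → α → Prop)
    (E' : Finset α) (e : α) : Prop :=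
  e ∈ E' ∨ ∃ C : Finset α, C ⊆ E' ∧ e ∈ M.spn C ∧ ∀ c ∈ C, lt c e

noncomputable def greedy {α : Type} [DecidableEq α] (M : FinMatroid α)
    (l : List α) : Finset α :=
  l.foldl (fun X e => if M.Indep (insert e X) then insert e X else X) ∅

section Aux

variable {α : Type} [DecidableEq α] (M : FinMatroid α)

lemma exists_basis (X : Finset α) : ∃ B, B ⊆ X ∧ M.Indep B ∧ B.card = M.rank X := by
  have h : M.rank X ∈ {n | ∃ Y ⊆ X, M.Indep Y ∧ Y.card = n} := by
    apply Nat.sSup_mem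
    · exact ⟨0, ∅, Finset.empty_subset X, M.indep_empty, Finset.card_empty⟩
    · refine ⟨X.card, ?_⟩
      rintro n ⟨Y, hYX, -, rfl⟩
      exact Finset.card_le_card hYX
  obtain ⟨B, h1, h2, h3⟩ := h
  exact ⟨B, h1, h2, h3⟩

lemma card_le_rank {Y X : Finset α} (hY : M.Indep Y) (hYX : Y ⊆ X) : Y.card ≤ M.rank X := by
  apply le_csSup
  · refine ⟨X.card, ?_⟩
    rintro n ⟨Z, hZX, -, rfl⟩
    exact Finset.card_le_card hZX
  · exact ⟨Y, hYX, hY, rfl⟩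

lemma rank_mono {X Y : Finset α} (h : X ⊆ Y) : M.rank X ≤ M.rank Y := by
  obtain ⟨B, h1, h2, h3⟩ := exists_basis M X
  exact h3 ▸ card_le_rank M h2 (h1.trans h)

lemma rank_indep {X : Finset α} (h : M.Indep X) : M.rank X = X.card := by
  refine le_antisymm ?_ (card_le_rank M h (subset_refl X))
  obtain ⟨B, h1, -, h3⟩ := exists_basis M X
  exact h3 ▸ Finset.card_le_card h1

lemma rank_insert_le_of_dep {B : Finset α} {y : α} (hB : M.Indep B)
    (hdep : ¬ M.Indep (insert y B)) : M.rank (insert y B) ≤ B.card := by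
  obtain ⟨D, h1, h2, h3⟩ := exists_basis M (insert y B)
  rw [← h3]
  by_contra h
  push_neg at h
  have hcard : (insert y B).card ≤ D.card := by
    have := Finset.card_insert_le y B
    omega
  have hD : D = insert y B := Finset.eq_of_subset_of_card_le h1 hcard
  exact hdep (hD ▸ h2)

lemma rank_insert_of_rank_eq {X Y : Finset α} {e : α} (hXY : X ⊆ Y)
    (hr : M.rank Y = M.rank X) (he : M.rank (insert e X) = M.rank X) :
    M.rank (insert e Y) = M.rank Y := by
  obtain ⟨B, hBX, hBi, hBc⟩ := exists_basis M X
  refine le_antisymm ?_ (rank_mono M (Finset.subset_insert _ _))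
  obtain ⟨D, hD1, hD2, hD3⟩ := exists_basis M (insert e Y)
  rw [← hD3]
  by_contra hcon
  push_neg at hcon
  obtain ⟨g, hg, hgi⟩ := M.indep_exchange hBi hD2 (by omega)
  have hgB : g ∉ B := (Finset.mem_sdiff.mp hg).2
  have hgD : g ∈ D := (Finset.mem_sdiff.mp hg).1
  rcases Finset.mem_insert.mp (hD1 hgD) with rfl | hgY
  · have hle : (insert g B).card ≤ M.rank (insert g X) :=
      card_le_rank M hgi (Finset.insert_subset_insert _ hBX)
    rw [he, Finset.card_insert_of_notMem hgB] at hle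
    omega
  · have hle : (insert g B).card ≤ M.rank Y :=
      card_le_rank M hgi (Finset.insert_subset hgY (hBX.trans hXY))
    rw [Finset.card_insert_of_notMem hgB] at hle
    omega

lemma rank_union_eq {X A : Finset α}
    (h : ∀ a ∈ A, a ∈ X ∨ M.rank (insert a X) = M.rank X) :
    M.rank (X ∪ A) = M.rank X := by
  induction A using Finset.induction_on with
  | empty => rw [Finset.union_empty]
  | @insert a A ha ih =>
    have hr := ih (fun b hb => h b (Finset.mem_insert_of_mem hb))
    rw [Finset.union_insert]
    rcases h a (Finset.mem_insert_self a A) with haX | hra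
    · rw [Finset.insert_eq_self.mpr (Finset.mem_union_left A haX), hr]
    · rw [rank_insert_of_rank_eq M Finset.subset_union_left hr hra, hr]

lemma extend_basis_aux (X : Finset α) :
    ∀ (k : ℕ) (C : Finset α), M.Indep C → C ⊆ X → M.rank X - C.card ≤ k →
    ∃ B, C ⊆ B ∧ B ⊆ X ∧ M.Indep B ∧ B.card = M.rank X := by
  intro k
  induction k with
  | zero =>
    intro C hC hCX hk
    have h1 := card_le_rank M hC hCX
    exact ⟨C, subset_refl C, hCX, hC, by omega⟩
  | succ k ih =>
    intro C hC hCX hk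
    by_cases hlt : C.card < M.rank X
    · obtain ⟨B0, hB1, hB2, hB3⟩ := exists_basis M X
      obtain ⟨g, hg, hgi⟩ := M.indep_exchange hC hB2 (by omega)
      have hgC : g ∉ C := (Finset.mem_sdiff.mp hg).2
      have hgX : g ∈ X := hB1 (Finset.mem_sdiff.mp hg).1
      have hcard : (insert g C).card = C.card + 1 := Finset.card_insert_of_notMem hgC
      obtain ⟨B, hB⟩ := ih (insert g C) hgi (Finset.insert_subset hgX hCX) (by omega)
      exact ⟨B, (Finset.subset_insert g C).trans hB.1, hB.2.1, hB.2.2⟩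
    · have h1 := card_le_rank M hC hCX
      exact ⟨C, subset_refl C, hCX, hC, by omega⟩

lemma extend_basis {C X : Finset α} (hC : M.Indep C) (hCX : C ⊆ X) :
    ∃ B, C ⊆ B ∧ B ⊆ X ∧ M.Indep B ∧ B.card = M.rank X :=
  extend_basis_aux M X (M.rank X - C.card) C hC hCX le_rfl

lemma spn_mono {X Y : Finset α} (h : X ⊆ Y) : M.spn X ⊆ M.spn Y := by
  rintro e ⟨heE, her⟩
  refine ⟨heE, ?_⟩
  obtain ⟨C, hCX, hCi, hCc⟩ := exists_basis M X
  obtain ⟨B, hCB, hBY, hBi, hBc⟩ := extend_basis M hCi (hCX.trans h)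
  have heC : M.rank (insert e C) = M.rank C := by
    refine le_antisymm ?_ (rank_mono M (Finset.subset_insert _ _))
    calc M.rank (insert e C) ≤ M.rank (insert e X) :=
          rank_mono M (Finset.insert_subset_insert _ hCX)
      _ = M.rank X := her
      _ = C.card := hCc.symm
      _ = M.rank C := (rank_indep M hCi).symm
  have key : ∀ y ∈ insert e Y, y ∈ B ∨ M.rank (insert y B) = M.rank B := by
    intro y hy
    by_cases hyB : y ∈ B
    · exact Or.inl hyB
    right
    refine le_antisymm ?_ (rank_mono M (Finset.subset_insert _ _))
    by_contra hne
    push_neg at hne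
    have hrB : M.rank B = B.card := rank_indep M hBi
    have hindep : M.Indep (insert y B) := by
      by_contra hdep
      have := rank_insert_le_of_dep M hBi hdep
      omega
    rcases Finset.mem_insert.mp hy with rfl | hyY
    · have hiC : M.Indep (insert y C) :=
        M.indep_mono (Finset.insert_subset_insert _ hCB) hindep
      have hle := card_le_rank M hiC (subset_refl _)
      rw [heC, rank_indep M hCi,
        Finset.card_insert_of_notMem (fun hc => hyB (hCB hc))] at hle
      omega
    · have hle := card_le_rank M hindep (Finset.insert_subset hyY hBY)
      rw [Finset.card_insert_of_notMem hyB] at hle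
      omega
  have h1 : M.rank (B ∪ insert e Y) = M.rank B := rank_union_eq M key
  have h2 : M.rank (insert e Y) ≤ M.rank B :=
    le_trans (rank_mono M Finset.subset_union_right) (le_of_eq h1)
  have h3 := rank_mono M (Finset.subset_insert e Y)
  have h4 : M.rank B = M.rank Y := by rw [rank_indep M hBi, hBc]
  omega

lemma greedy_invariant (lt : α → α → Prop) [IsStrictTotalOrder α lt]
    (T : Finset α) (hT : M.Indep T) :
    ∀ (rest : List α) (X : Finset α), X ⊆ T →
      (∀ t ∈ T, t ∉ X → t ∈ rest) →
      rest.Pairwise lt →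
      (∀ e ∈ rest, Dominates M lt T e) →
      (∀ x ∈ X, ∀ e ∈ rest, lt x e) →
      List.foldl (fun X e => if M.Indep (insert e X) then insert e X else X) X rest = T := by
  intro rest
  induction rest with
  | nil =>
    intro X hXT hTX _ _ _
    simp only [List.foldl_nil]
    refine Finset.Subset.antisymm hXT (fun t ht => ?_)
    by_contra hcon
    exact absurd (hTX t ht hcon) List.not_mem_nil
  | cons e rest ih =>
    intro X hXT hTX hsort hdom hlt
    rw [List.foldl_cons]
    have hhead := (List.pairwise_cons.mp hsort).1
    have hsort' := (List.pairwise_cons.mp hsort).2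
    by_cases heT : e ∈ T
    · have hind : M.Indep (insert e X) :=
        M.indep_mono (Finset.insert_subset heT hXT) hT
      rw [if_pos hind]
      apply ih
      · exact Finset.insert_subset heT hXT
      · intro t ht htX
        have hmem : t ∈ e :: rest := hTX t ht (fun hh => htX (Finset.mem_insert_of_mem hh))
        rcases List.mem_cons.mp hmem with rfl | hh
        · exact absurd (Finset.mem_insert_self t X) htX
        · exact hh
      · exact hsort'
      · exact fun f hf => hdom f (List.mem_cons_of_mem e hf)
      · intro x hx f hf
        rcases Finset.mem_insert.mp hx with rfl | hxX
        · exact hhead f hf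
        · exact hlt x hxX f (List.mem_cons_of_mem e hf)
    · rcases hdom e (List.mem_cons_self (a := e) (l := rest)) with heT' | ⟨C, hCT, hspn, hClt⟩
      · exact absurd heT' heT
      have hCX : C ⊆ X := by
        intro c hc
        by_contra hcX
        rcases List.mem_cons.mp (hTX c (hCT hc) hcX) with rfl | hh
        · exact heT (hCT hc)
        · exact asymm (hClt c hc) (hhead c hh)
      have hespn : e ∈ M.spn X := spn_mono M hCX hspn
      have hXi : M.Indep X := M.indep_mono hXT hT
      have heX : e ∉ X := fun hh => heT (hXT hh)
      have hnind : ¬ M.Indep (insert e X) := by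
        intro hi
        have hle := card_le_rank M hi (subset_refl _)
        rw [hespn.2, rank_indep M hXi, Finset.card_insert_of_notMem heX] at hle
        omega
      rw [if_neg hnind]
      refine ih X hXT ?_ hsort' ?_ ?_
      · intro t ht htX
        rcases List.mem_cons.mp (hTX t ht htX) with rfl | hh
        · exact absurd ht heT
        · exact hh
      · exact fun f hf => hdom f (List.mem_cons_of_mem e hf)
      · exact fun x hx f hf => hlt x hx f (List.mem_cons_of_mem e hf)

lemma counting_le [LinearOrder α] (T : Finset α) (hT : M.Indep T)
    (X : Finset α) (hX : M.Indep X)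
    (hdom : ∀ x ∈ X, Dominates M (· < ·) T x) (a : α) :
    (X.filter (· ≤ a)).card ≤ (T.filter (· ≤ a)).card := by
  set A := X.filter (· ≤ a) with hA
  set B := T.filter (· ≤ a) with hB
  have hAi : M.Indep A := M.indep_mono (Finset.filter_subset _ _) hX
  have hBi : M.Indep B := M.indep_mono (Finset.filter_subset _ _) hT
  have key : ∀ x ∈ A, x ∈ B ∨ M.rank (insert x B) = M.rank B := by
    intro x hxA
    have hxX := Finset.mem_filter.mp hxA
    rcases hdom x hxX.1 with hxT | ⟨C, hCT, hspn, hClt⟩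
    · exact Or.inl (Finset.mem_filter.mpr ⟨hxT, hxX.2⟩)
    · right
      have hCB : C ⊆ B := fun c hc => Finset.mem_filter.mpr
        ⟨hCT hc, le_of_lt (lt_of_lt_of_le (hClt c hc) hxX.2)⟩
      exact (spn_mono M hCB hspn).2
  calc A.card = M.rank A := (rank_indep M hAi).symm
    _ ≤ M.rank (B ∪ A) := rank_mono M Finset.subset_union_right
    _ = M.rank B := rank_union_eq M key
    _ = B.card := rank_indep M hBi

end Aux

lemma sum_le_counting {α : Type} [DecidableEq α] [LinearOrder α]
    (w : α → ℝ) (hw0 : ∀ e, 0 ≤ w e) (hwd : ∀ e f : α, e < f → w f ≤ w e) :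
    ∀ (n : ℕ) (X T : Finset α), X.card = n →
      (∀ a : α, (X.filter (· ≤ a)).card ≤ (T.filter (· ≤ a)).card) →
      ∑ e ∈ X, w e ≤ ∑ e ∈ T, w e := by
  intro n
  induction n with
  | zero =>
    intro X T hc _
    rw [Finset.card_eq_zero.mp hc, Finset.sum_empty]
    exact Finset.sum_nonneg fun e _ => hw0 e
  | succ n ih =>
    intro X T hc hcount
    have hne : X.Nonempty := Finset.card_pos.mp (by omega)
    set m := X.max' hne with hm
    have hmX : m ∈ X := X.max'_mem hne
    have hXm : X.filter (· ≤ m) = X :=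
      Finset.filter_true_of_mem (fun x hx => X.le_max' x hx)
    have hTm : (T.filter (· ≤ m)).Nonempty := by
      rw [← Finset.card_pos]
      have h := hcount m
      rw [hXm] at h
      omega
    set t := (T.filter (· ≤ m)).max' hTm with htdef
    have htmem : t ∈ T.filter (· ≤ m) := (T.filter (· ≤ m)).max'_mem hTm
    have htT : t ∈ T := (Finset.mem_filter.mp htmem).1
    have htm : t ≤ m := (Finset.mem_filter.mp htmem).2
    have hwmt : w m ≤ w t := by
      rcases lt_or_eq_of_le htm with h | h
      · exact hwd t m h
      · rw [h]
    have hcount' : ∀ a : α,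
        ((X.erase m).filter (· ≤ a)).card ≤ ((T.erase t).filter (· ≤ a)).card := by
      intro a
      rw [Finset.filter_erase, Finset.filter_erase]
      by_cases hma : m ≤ a
      · have hm_in : m ∈ X.filter (· ≤ a) := Finset.mem_filter.mpr ⟨hmX, hma⟩
        have ht_in : t ∈ T.filter (· ≤ a) := Finset.mem_filter.mpr ⟨htT, le_trans htm hma⟩
        rw [Finset.card_erase_of_mem hm_in, Finset.card_erase_of_mem ht_in]
        exact Nat.sub_le_sub_right (hcount a) 1
      · have hm_not : m ∉ X.filter (· ≤ a) := fun h => hma (Finset.mem_filter.mp h).2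
        rw [Finset.erase_eq_of_notMem hm_not]
        by_cases hta : t ≤ a
        · have ham : a ≤ m := le_of_lt (lt_of_not_ge hma)
          have ht_in : t ∈ T.filter (· ≤ a) := Finset.mem_filter.mpr ⟨htT, hta⟩
          have hTsub : T.filter (· ≤ m) ⊆ T.filter (· ≤ a) := by
            intro u hu
            exact Finset.mem_filter.mpr ⟨(Finset.mem_filter.mp hu).1,
              le_trans ((T.filter (· ≤ m)).le_max' u hu) hta⟩
          have hXsub : X.filter (· ≤ a) ⊂ X.filter (· ≤ m) := by
            refine ⟨fun x hx => ?_, fun hsub => hm_not (hsub ?_)⟩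
            · have hx' := Finset.mem_filter.mp hx
              exact Finset.mem_filter.mpr ⟨hx'.1, le_trans hx'.2 ham⟩
            · exact Finset.mem_filter.mpr ⟨hmX, le_rfl⟩
          have h1 : (X.filter (· ≤ a)).card < (X.filter (· ≤ m)).card :=
            Finset.card_lt_card hXsub
          have h2 : (T.filter (· ≤ m)).card ≤ (T.filter (· ≤ a)).card :=
            Finset.card_le_card hTsub
          have h3 := hcount m
          rw [Finset.card_erase_of_mem ht_in]
          omega
        · have ht_not : t ∉ T.filter (· ≤ a) := fun h => hta (Finset.mem_filter.mp h).2
          rw [Finset.erase_eq_of_notMem ht_not]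
          exact hcount a
    have hXcard : (X.erase m).card = n := by
      rw [Finset.card_erase_of_mem hmX]; omega
    have hsum := ih (X.erase m) (T.erase t) hXcard hcount'
    calc ∑ e ∈ X, w e = w m + ∑ e ∈ X.erase m, w e := (Finset.add_sum_erase X w hmX).symm
      _ ≤ w t + ∑ e ∈ T.erase t, w e := add_le_add hwmt hsum
      _ = ∑ e ∈ T, w e := Finset.add_sum_erase T w htT

theorem stmt6 {α : Type} [DecidableEq α] (M : FinMatroid α)
    (lt : α → α → Prop) [IsStrictTotalOrder α lt]
    (T : Finset α) (hT : M.Indep T)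
    (l : List α) (hnd : l.Nodup) (hsort : l.Pairwise lt)
    (hmem : ∀ e, e ∈ l ↔ e ∈ M.E ∧ Dominates M lt T e) :
    greedy M l = T ∧
      ∀ w : α → ℝ, (∀ e, 0 ≤ w e) → (∀ e f, lt e f → w f ≤ w e) →
        ∀ X ⊆ l.toFinset, M.Indep X → ∑ e ∈ X, w e ≤ ∑ e ∈ T, w e := by
  constructor
  · refine greedy_invariant M lt T hT l ∅ (Finset.empty_subset T) ?_ hsort ?_ ?_
    · intro t ht _
      exact (hmem t).mpr ⟨M.subset_ground hT ht, Or.inl ht⟩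
    · exact fun e he => ((hmem e).mp he).2
    · intro x hx
      exact absurd hx (Finset.notMem_empty x)
  · intro w hw0 hwd X hXl hX
    letI : DecidableRel lt := Classical.decRel lt
    letI : LinearOrder α := linearOrderOfSTO lt
    have hdom : ∀ x ∈ X, Dominates M (· < ·) T x := by
      intro x hx
      have hxl : x ∈ l := List.mem_toFinset.mp (hXl hx)
      exact ((hmem x).mp hxl).2
    exact sum_le_counting w hw0 hwd X.card X T rfl
      (counting_le M T hT X hX hdom)
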